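/- arXiv:2205.02528 — 3 statements merged into one kernel-verified Lean document; each statement's English description precedes it below -/
import Mathlib

section
/- For the system ẋ₁ = x₂, ẋ₂ = -6/(1-t)²·x₁ - 4/(1-t)·x₂, every solution defined on [s,1) with s ∈ [0,1) satisfies lim_{t→1⁻} (x₁(t), x₂(t)) = (0,0); i.e., the system has an absolute deadline at t = 1. -/
open Set Filter

/-- every solution of ẋ₁ = x₂, ẋ₂ = -6/(1-t)²x₁ - 4/(1-t)x₂ on [s,1)
    tends to (0,0) as t → 1⁻ (absolute deadline at t = 1). -/
theorem stmt1 (s : ℝ) (hs : s ∈ Set.Ico (0:ℝ) 1) (x₁ x₂ : ℝ → ℝ)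
    (hsol : ∀ t ∈ Set.Ico s (1:ℝ),
        HasDerivAt x₁ (x₂ t) t ∧
        HasDerivAt x₂ (-6/(1-t)^2 * x₁ t - 4/(1-t) * x₂ t) t) :
    Filter.Tendsto (fun t => (x₁ t, x₂ t)) (nhdsWithin 1 (Set.Iio 1))
      (nhds ((0:ℝ), (0:ℝ))) := by
  obtain ⟨hs0, hs1⟩ := hs
  set F : ℝ → ℝ := fun u => (3 * x₁ u + (1 - u) * x₂ u) * ((1 - u) ^ 2)⁻¹ with hFdef
  set G : ℝ → ℝ := fun u => (2 * x₁ u + (1 - u) * x₂ u) * ((1 - u) ^ 3)⁻¹ with hGdef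
  -- derivative facts
  have hne : ∀ u ∈ Set.Ico s (1:ℝ), (1 - u) ≠ 0 := by
    intro u hu; have := hu.2; linarith [sub_pos.mpr hu.2]
  have hF' : ∀ u ∈ Set.Ico s (1:ℝ), HasDerivAt F 0 u := by
    intro u hu
    obtain ⟨h1, h2⟩ := hsol u hu
    have hu0 : (1 - u) ≠ 0 := hne u hu
    have hid : HasDerivAt (fun v : ℝ => 1 - v) (-1) u := by
      simpa using (hasDerivAt_id u).const_sub 1
    have hnum : HasDerivAt (fun v => 3 * x₁ v + (1 - v) * x₂ v)
        (3 * x₂ u + ((-1) * x₂ u + (1 - u) * (-6/(1-u)^2 * x₁ u - 4/(1-u) * x₂ u))) u :=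
      (h1.const_mul 3).add (hid.mul h2)
    have hpow : HasDerivAt (fun v : ℝ => (1 - v) ^ 2) (2 * (1 - u) ^ 1 * (-1)) u := hid.pow 2
    have hinv := hpow.inv (pow_ne_zero 2 hu0)
    have := hnum.mul hinv
    refine this.congr_deriv ?_
    simp only [Pi.inv_apply]
    field_simp
    ring
  have hG' : ∀ u ∈ Set.Ico s (1:ℝ), HasDerivAt G 0 u := by
    intro u hu
    obtain ⟨h1, h2⟩ := hsol u hu
    have hu0 : (1 - u) ≠ 0 := hne u hu
    have hid : HasDerivAt (fun v : ℝ => 1 - v) (-1) u := by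
      simpa using (hasDerivAt_id u).const_sub 1
    have hnum : HasDerivAt (fun v => 2 * x₁ v + (1 - v) * x₂ v)
        (2 * x₂ u + ((-1) * x₂ u + (1 - u) * (-6/(1-u)^2 * x₁ u - 4/(1-u) * x₂ u))) u :=
      (h1.const_mul 2).add (hid.mul h2)
    have hpow : HasDerivAt (fun v : ℝ => (1 - v) ^ 3) (3 * (1 - u) ^ 2 * (-1)) u := hid.pow 3
    have hinv := hpow.inv (pow_ne_zero 3 hu0)
    have := hnum.mul hinv
    refine this.congr_deriv ?_
    simp only [Pi.inv_apply]
    field_simp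
    ring
  -- constancy on [s,t] for t ∈ Ico s 1
  have hconst : ∀ (H : ℝ → ℝ), (∀ u ∈ Set.Ico s (1:ℝ), HasDerivAt H 0 u) →
      ∀ t ∈ Set.Ico s (1:ℝ), H t = H s := by
    intro H hH t ht
    have hsub : Set.Icc s t ⊆ Set.Ico s 1 := fun u hu => ⟨hu.1, lt_of_le_of_lt hu.2 ht.2⟩
    have hcont : ContinuousOn H (Set.Icc s t) := fun u hu =>
      (hH u (hsub hu)).continuousAt.continuousWithinAt
    have hderiv : ∀ u ∈ Set.Ico s t, HasDerivWithinAt H 0 (Set.Ici u) u := fun u hu =>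
      (hH u (hsub ⟨hu.1, hu.2.le⟩)).hasDerivWithinAt
    exact constant_of_has_deriv_right_zero hcont hderiv t ⟨ht.1, le_rfl⟩
  have hFc := hconst F hF'
  have hGc := hconst G hG'
  set A := F s with hA
  set B := G s with hB
  -- explicit form on Ico s 1
  have hx : ∀ t ∈ Set.Ico s (1:ℝ),
      x₁ t = A * (1 - t) ^ 2 - B * (1 - t) ^ 3 ∧
      x₂ t = -2 * A * (1 - t) + 3 * B * (1 - t) ^ 2 := by
    intro t ht
    have h1 : (3 * x₁ t + (1 - t) * x₂ t) * ((1 - t) ^ 2)⁻¹ = A := hFc t ht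
    have h2 : (2 * x₁ t + (1 - t) * x₂ t) * ((1 - t) ^ 3)⁻¹ = B := hGc t ht
    have ht0 : (1 - t) ≠ 0 := hne t ht
    rw [← div_eq_mul_inv, div_eq_iff (pow_ne_zero 2 ht0)] at h1
    rw [← div_eq_mul_inv, div_eq_iff (pow_ne_zero 3 ht0)] at h2
    have hx1 : x₁ t = A * (1 - t) ^ 2 - B * (1 - t) ^ 3 := by linarith
    refine ⟨hx1, ?_⟩
    have h3 : (1 - t) * x₂ t = (1 - t) * (-2 * A * (1 - t) + 3 * B * (1 - t) ^ 2) := by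
      linear_combination h1 - 3 * hx1
    exact mul_left_cancel₀ ht0 h3
  -- the limit
  have hpoly : Filter.Tendsto
      (fun t : ℝ => (A * (1 - t) ^ 2 - B * (1 - t) ^ 3,
                     -2 * A * (1 - t) + 3 * B * (1 - t) ^ 2))
      (nhdsWithin 1 (Set.Iio 1)) (nhds ((0:ℝ), (0:ℝ))) := by
    have hc1 : Filter.Tendsto (fun t : ℝ => A * (1 - t) ^ 2 - B * (1 - t) ^ 3)
        (nhds 1) (nhds 0) := by
      have hc : Continuous (fun t : ℝ => A * (1 - t) ^ 2 - B * (1 - t) ^ 3) := by fun_prop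
      exact hc.tendsto' 1 0 (by norm_num)
    have hc2 : Filter.Tendsto (fun t : ℝ => -2 * A * (1 - t) + 3 * B * (1 - t) ^ 2)
        (nhds 1) (nhds 0) := by
      have hc : Continuous (fun t : ℝ => -2 * A * (1 - t) + 3 * B * (1 - t) ^ 2) := by fun_prop
      exact hc.tendsto' 1 0 (by norm_num)
    exact (hc1.prodMk_nhds hc2).mono_left nhdsWithin_le_nhds
  refine hpoly.congr' ?_
  have hmem : Set.Ioo s 1 ∈ nhdsWithin 1 (Set.Iio 1) := by
    rw [mem_nhdsWithin]
    exact ⟨Set.Ioi s, isOpen_Ioi, hs1, fun u hu => ⟨hu.1, hu.2⟩⟩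
  filter_upwards [hmem] with t ht
  obtain ⟨e1, e2⟩ := hx t ⟨ht.1.le, ht.2⟩
  rw [e1, e2]
end

section
/- Suppose the chain-of-integrators system ẋᵢ = x_{i+1} (i = 1,…,n-1), ẋₙ = v(t,x) + d(t) on [0,T) with n ≥ 2 has an absolute deadline at T. Then for every pair δ, ε > 0 there exists s ∈ (0,T) such that for every solution x and every s' ∈ [s,T): if |x₁(s')| ≥ δ, then ‖x(t)‖ > ε for some t ∈ (s',T). -/
open Set Filter

/-- A solution, on `[s,T)`, of the closed-loop integrator chain
    ẋᵢ = x_{i+1} (i < n), ẋₙ = v(t, x + η(t)) + d(t). -/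
def ChainSol (n : ℕ) (hn : 0 < n) (T : ℝ)
    (v : ℝ → EuclideanSpace ℝ (Fin n) → ℝ) (d : ℝ → ℝ)
    (η : ℝ → EuclideanSpace ℝ (Fin n)) (s : ℝ)
    (x : ℝ → EuclideanSpace ℝ (Fin n)) : Prop :=
  ∀ t ∈ Set.Ico s T,
    (∀ i : Fin n, ∀ h : (i : ℕ) + 1 < n,
      HasDerivAt (fun τ => x τ i) (x t ⟨(i : ℕ) + 1, h⟩) t) ∧
    HasDerivAt (fun τ => x τ ⟨n - 1, Nat.sub_lt hn one_pos⟩)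
      (v t (x t + η t) + d t) t

/-- Absolute deadline at `T`: every noise-free solution from any initial time in
    `[0,T)` converges to `0` as `t → T⁻`. -/
def ChainAbsDeadline (n : ℕ) (hn : 0 < n) (T : ℝ)
    (v : ℝ → EuclideanSpace ℝ (Fin n) → ℝ) (d : ℝ → ℝ) : Prop :=
  ∀ s ∈ Set.Ico (0:ℝ) T, ∀ x : ℝ → EuclideanSpace ℝ (Fin n),
    ChainSol n hn T v d (fun _ => 0) s x →
    Filter.Tendsto x (nhdsWithin T (Set.Iio T)) (nhds 0)

lemma abs_coord_le_norm {n : ℕ} (y : EuclideanSpace ℝ (Fin n)) (i : Fin n) :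
    |y i| ≤ ‖y‖ := by
  rw [EuclideanSpace.norm_eq]
  have h1 : |y i| = Real.sqrt (|y i| ^ 2) := (Real.sqrt_sq (abs_nonneg _)).symm
  rw [h1]
  apply Real.sqrt_le_sqrt
  have := Finset.single_le_sum (f := fun j => ‖y j‖ ^ 2)
    (fun j _ => sq_nonneg _) (Finset.mem_univ i)
  simpa [Real.norm_eq_abs] using this

/-- Lemma 1: if the chain has an absolute deadline at `T`, then for
    every δ, ε > 0 there is s ∈ (0,T) such that any solution with |x₁(s')| ≥ δ at
    some s' ∈ [s,T) satisfies ‖x(t)‖ > ε at some t ∈ (s',T). -/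
theorem stmt4 (n : ℕ) (hn : 2 ≤ n) (T : ℝ) (hT : 0 < T)
    (v : ℝ → EuclideanSpace ℝ (Fin n) → ℝ) (d : ℝ → ℝ)
    (habs : ChainAbsDeadline n (by omega) T v d) :
    ∀ δ > (0:ℝ), ∀ ε > (0:ℝ), ∃ s ∈ Set.Ioo (0:ℝ) T,
      ∀ s' ∈ Set.Ico s T, ∀ x : ℝ → EuclideanSpace ℝ (Fin n),
        ChainSol n (by omega) T v d (fun _ => 0) s' x →
        δ ≤ |x s' ⟨0, by omega⟩| →
        ∃ t ∈ Set.Ioo s' T, ε < ‖x t‖ := by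
  intro δ hδ ε hε
  set ε' : ℝ := max ε (δ / T) + 1 with hε'def
  have hmax1 : ε ≤ max ε (δ / T) := le_max_left _ _
  have hmax2 : δ / T ≤ max ε (δ / T) := le_max_right _ _
  have hε'pos : 0 < ε' := by simp only [hε'def]; linarith
  have hε'ε : ε < ε' := by simp only [hε'def]; linarith
  have hδε'pos : 0 < δ / ε' := div_pos hδ hε'pos
  have hδε'T : δ / ε' < T := by
    rw [div_lt_iff₀ hε'pos]
    have : δ / T < ε' := by simp only [hε'def]; linarith
    rw [div_lt_iff₀ hT] at this
    nlinarith
  refine ⟨T - δ / ε', ⟨by linarith, by linarith⟩, ?_⟩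
  intro s' hs' x hx h1
  have hs'0 : 0 < s' := lt_of_lt_of_le (by linarith) hs'.1
  have hs'T : s' < T := hs'.2
  set i0 : Fin n := ⟨0, by omega⟩
  set i1 : Fin n := ⟨1, by omega⟩
  have htend : Filter.Tendsto x (nhdsWithin T (Set.Iio T)) (nhds 0) :=
    habs s' ⟨hs'0.le, hs'T⟩ x hx
  have htend0 : Filter.Tendsto (fun t => x t i0) (nhdsWithin T (Set.Iio T)) (nhds 0) := by
    have hcont := (EuclideanSpace.proj (𝕜 := ℝ) i0).continuous.tendsto (0 : EuclideanSpace ℝ (Fin n))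
    have := hcont.comp htend
    simpa [Function.comp_def] using this
  set g : ℝ → ℝ := fun t => if t < T then x t i0 else 0 with hg
  have hderiv' : ∀ t ∈ Set.Ico s' T, HasDerivAt g (x t i1) t := by
    intro t ht
    have hd : HasDerivAt (fun τ => x τ i0) (x t i1) t := by
      have := (hx t ht).1 i0 (show (0:ℕ)+1 < n by omega)
      convert this using 2
    apply hd.congr_of_eventuallyEq
    filter_upwards [isOpen_Iio.mem_nhds ht.2] with τ hτ
    simp [hg, show τ < T from hτ]
  have hgT : g T = 0 := by simp [hg]
  have hcont : ContinuousOn g (Set.Icc s' T) := by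
    intro t ht
    rcases eq_or_lt_of_le ht.2 with rfl | hlt
    · unfold ContinuousWithinAt
      rw [hgT]
      have hsub : Set.Icc s' t ⊆ Set.Iio t ∪ {t} := by
        intro y hy
        rcases eq_or_lt_of_le hy.2 with rfl | h
        · exact Or.inr rfl
        · exact Or.inl h
      apply Filter.Tendsto.mono_left _ (nhdsWithin_mono t hsub)
      rw [nhdsWithin_union]
      rw [Filter.tendsto_sup]
      constructor
      · apply htend0.congr'
        filter_upwards [self_mem_nhdsWithin] with τ hτ
        simp [hg, show τ < t from hτ]
      · rw [nhdsWithin_singleton]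
        have : g t = 0 := by simp [hg]
        rw [← this]
        exact tendsto_pure_nhds g t
    · exact (hderiv' t ⟨ht.1, hlt⟩).continuousAt.continuousWithinAt
  have hderiv : ∀ t ∈ Set.Ioo s' T, HasDerivAt g (x t i1) t :=
    fun t ht => hderiv' t ⟨ht.1.le, ht.2⟩
  obtain ⟨c, hc, hceq⟩ := exists_hasDerivAt_eq_slope g (fun t => x t i1) hs'T hcont hderiv
  refine ⟨c, hc, ?_⟩
  have hgs' : g s' = x s' i0 := by simp [hg, hs'T]
  have hTs' : 0 < T - s' := by linarith
  have habs1 : |x c i1| = |x s' i0| / (T - s') := by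
    rw [hceq, hgT, hgs']
    rw [abs_div, abs_of_pos hTs']
    simp
  have hle : ε' ≤ |x c i1| := by
    rw [habs1]
    rw [le_div_iff₀ hTs']
    have h2 : T - s' ≤ δ / ε' := by linarith [hs'.1]
    have : ε' * (T - s') ≤ ε' * (δ / ε') := by
      apply mul_le_mul_of_nonneg_left h2 hε'pos.le
    have heq : ε' * (δ / ε') = δ := by field_simp
    calc ε' * (T - s') ≤ δ := by rw [heq] at this; exact this
      _ ≤ |x s' i0| := h1
  calc ε < ε' := hε'ε
    _ ≤ |x c i1| := hle
    _ ≤ ‖x c‖ := abs_coord_le_norm _ _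
end

section
/- Let x : [s,T] → ℝⁿ be absolutely continuous with x(T) = 0, x(s) ∈ [-δ,δ]ⁿ for some δ > 0, and satisfying ẋᵢ = x_{i+1} for i = 1,…,n-1 and ẋₙ = v(t, x(t)) + d(t) a.e. Suppose T - s ≤ δ/ε' with ε' > max(ε, δ), and suppose x(t) ∈ [-δ,δ]ⁿ for all t in some interval [s',T) with x_i(s') = δ for some index i. If i < n, then there exists t ∈ (s',T) with |x_{i+1}(t)| ≥ ε' > δ, contradicting x(t) ∈ [-δ,δ]ⁿ; hence necessarily i = n. -/
open Set Filter

/-- interior step of the proof of Theorem 1(iii): for a chain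
    trajectory vanishing at T, confined to the box [-δ,δ]ⁿ on [s',T) after
    entering it with x_i(s') = δ, and with T - s ≤ δ/ε', ε' > max(ε,δ): if
    i < n then some |x_{i+1}(t)| reaches ε' > δ, contradicting the box bound;
    hence the entry coordinate must be i = n. -/
theorem stmt15 (n : ℕ) (hn : 2 ≤ n) (s s' T δ ε ε' : ℝ)
    (v : ℝ → EuclideanSpace ℝ (Fin n) → ℝ) (d : ℝ → ℝ)
    (x : ℝ → EuclideanSpace ℝ (Fin n))
    (hδ : 0 < δ) (hε' : max ε δ < ε') (hsT : s < T)
    (hcont : ContinuousOn x (Set.Icc s T))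
    (hchain : ∀ t ∈ Set.Ioo s T, ∀ i : Fin n, ∀ h : (i : ℕ) + 1 < n,
      HasDerivAt (fun τ => x τ i) (x t ⟨(i : ℕ) + 1, h⟩) t)
    (hlast : ∀ᵐ t, t ∈ Set.Ioo s T →
      HasDerivAt (fun τ => x τ ⟨n - 1, by omega⟩) (v t (x t) + d t) t)
    (hxT : x T = 0)
    (hgap : T - s ≤ δ / ε')
    (hs' : s' ∈ Set.Ico s T)
    (hbox : ∀ t ∈ Set.Ico s' T, ∀ j : Fin n, |x t j| ≤ δ)
    (i : Fin n) (hentry : x s' i = δ) :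
    (∀ h : (i : ℕ) + 1 < n,
      ∃ t ∈ Set.Ioo s' T, ε' ≤ |x t ⟨(i : ℕ) + 1, h⟩|) ∧
    (i : ℕ) = n - 1 := by
  have hε'δ : δ < ε' := lt_of_le_of_lt (le_max_right ε δ) hε'
  have hε'pos : 0 < ε' := hδ.trans hε'δ
  have key : ∀ h : (i : ℕ) + 1 < n,
      ∃ t ∈ Set.Ioo s' T, ε' ≤ |x t ⟨(i : ℕ) + 1, h⟩| := by
    intro h
    have hs'T : s' < T := hs'.2
    have hcont' : ContinuousOn (fun τ => x τ i) (Set.Icc s' T) :=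
      (((continuous_apply (i : Fin n)).comp (PiLp.continuous_ofLp 2 _)).comp_continuousOn hcont).mono
        (Set.Icc_subset_Icc hs'.1 le_rfl)
    have hderiv : ∀ t ∈ Set.Ioo s' T,
        HasDerivAt (fun τ => x τ i) (x t ⟨(i : ℕ) + 1, h⟩) t := fun t ht =>
      hchain t ⟨lt_of_le_of_lt hs'.1 ht.1, ht.2⟩ i h
    obtain ⟨c, hc, hceq⟩ := exists_hasDerivAt_eq_slope (fun τ => x τ i) _ hs'T hcont' hderiv
    refine ⟨c, hc, ?_⟩
    have hxTi : x T i = 0 := by rw [hxT]; rfl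
    rw [hceq, hxTi, hentry]
    have hTs' : 0 < T - s' := sub_pos.2 hs'T
    have h1 : T - s' ≤ δ / ε' := le_trans (by linarith [hs'.1]) hgap
    rw [abs_div, abs_of_pos hTs', zero_sub, abs_neg, abs_of_pos hδ, le_div_iff₀ hTs']
    calc ε' * (T - s') ≤ ε' * (δ / ε') := by nlinarith
      _ = δ := by field_simp
  refine ⟨key, ?_⟩
  by_contra hne
  have h : (i : ℕ) + 1 < n := by have := i.isLt; omega
  obtain ⟨t, ht, hle⟩ := key h
  have := hbox t ⟨le_of_lt ht.1, ht.2⟩ ⟨(i : ℕ) + 1, h⟩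
  linarith [abs_nonneg (x t ⟨(i : ℕ) + 1, h⟩)]
end
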